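/- (Higman) Let G be a finite group and let H be a finite subgroup of V(ℤG). Then the elements of H, regarded as elements of the rational group algebra ℚG via the canonical embedding ℤG → ℚG, are linearly independent over ℚ. -/

import Mathlib

open MonoidAlgebra

/-- The augmentation map of a group ring: the sum of the coefficients. -/
noncomputable def aug (R : Type*) [CommRing R] (G : Type*) [Group G] :
    MonoidAlgebra R G →+* R :=
  MonoidAlgebra.liftNCRingHom (RingHom.id R) 1 (fun _ _ => Commute.one_right _)

/-- The coefficient-wise ring homomorphism between group rings induced by a
ring homomorphism of the coefficient rings. -/
noncomputable def mapCoeff {R S : Type*} [CommRing R] [CommRing S] (G : Type*) [Group G]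
    (f : R →+* S) : MonoidAlgebra R G →+* MonoidAlgebra S G :=
  MonoidAlgebra.liftNCRingHom (MonoidAlgebra.singleOneRingHom.comp f) (MonoidAlgebra.of S G)
    (fun r g => by
      simp [Commute, SemiconjBy, MonoidAlgebra.singleOneRingHom,
        MonoidAlgebra.single_mul_single])

open scoped Classical in
/-- The partial augmentation at `g`: the sum of the coefficients at the
conjugacy class of `g`. -/
noncomputable def partialAug {G : Type*} [Group G] [Fintype G] (g : G)
    (a : MonoidAlgebra ℤ G) : ℤ :=
  ∑ x ∈ Finset.univ.filter (fun x => IsConj g x), a.coeff x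


section Aux
variable {G : Type*} [Group G]

lemma aug_single (R : Type*) [CommRing R] (g : G) (r : R) : aug R G (single g r) = r := by
  simp [aug, liftNCRingHom, MonoidAlgebra.liftNC_single]

lemma mapCoeff_single {R S : Type*} [CommRing R] [CommRing S] (f : R →+* S) (g : G) (r : R) :
    mapCoeff G f (single g r) = single g (f r) := by
  simp [mapCoeff, liftNCRingHom, MonoidAlgebra.liftNC_single, MonoidAlgebra.of_apply,
    MonoidAlgebra.singleOneRingHom, MonoidAlgebra.single_mul_single]

lemma mapCoeff_apply {R S : Type*} [CommRing R] [CommRing S] (f : R →+* S)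
    (a : MonoidAlgebra R G) (x : G) : (mapCoeff G f a).coeff x = f (a.coeff x) := by
  induction a using MonoidAlgebra.induction_linear with
  | zero => simp
  | add p q hp hq => rw [map_add, coeff_add, Finsupp.add_apply, hp, hq, coeff_add, Finsupp.add_apply, map_add]
  | single g r => rw [mapCoeff_single]; classical simp [coeff_single, Finsupp.single_apply, apply_ite f]

variable [Fintype G]

noncomputable def Tr : MonoidAlgebra ℂ G →ₗ[ℂ] ℂ :=
  (LinearMap.trace ℂ (MonoidAlgebra ℂ G)).comp (Algebra.lmul ℂ (MonoidAlgebra ℂ G)).toLinearMap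

lemma Tr_apply (a : MonoidAlgebra ℂ G) : Tr a = (Fintype.card G : ℂ) * a.coeff 1 := by
  classical
  let b : Module.Basis G ℂ (MonoidAlgebra ℂ G) := MonoidAlgebra.basis G ℂ
  rw [Tr, LinearMap.comp_apply]
  rw [LinearMap.trace_eq_matrix_trace ℂ b ((Algebra.lmul ℂ (MonoidAlgebra ℂ G)).toLinearMap a),
    Matrix.trace]
  have : ∀ g : G, (LinearMap.toMatrix b b
      ((Algebra.lmul ℂ (MonoidAlgebra ℂ G)).toLinearMap a)) g g = a.coeff 1 := by
    intro g
    rw [LinearMap.toMatrix_apply]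
    show (a * MonoidAlgebra.single g (1:ℂ)).coeff g = a.coeff 1
    have h2 : (a * MonoidAlgebra.single g (1:ℂ)).coeff g = a.coeff 1 := by
      rw [MonoidAlgebra.coeff_mul_single_apply, mul_inv_cancel, mul_one]
    exact h2
  simp only [Matrix.diag_apply]
  rw [Finset.sum_congr rfl (fun g _ => this g), Finset.sum_const, Finset.card_univ,
    nsmul_eq_mul]

section eigProj
variable {A : Type*} [Ring A] [Algebra ℂ A]

noncomputable def eigProj (n : ℕ) (ζ : ℂ) (x : A) : A :=
  (n : ℂ)⁻¹ • ∑ k ∈ Finset.range n, (ζ⁻¹) ^ k • x ^ k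

lemma shift_sum (x : A) {n : ℕ} (hx : x ^ n = 1) {ζ : ℂ} (hζn : ζ ^ n = 1) (hζ0 : ζ ≠ 0) :
    ∑ k ∈ Finset.range n, (ζ⁻¹) ^ k • x ^ (k + 1)
      = ζ • ∑ k ∈ Finset.range n, (ζ⁻¹) ^ k • x ^ k := by
  have hstep : ∀ k : ℕ, (ζ⁻¹) ^ k • x ^ (k + 1) = ζ • ((ζ⁻¹) ^ (k + 1) • x ^ (k + 1)) := by
    intro k
    have h : ζ * ζ⁻¹ ^ (k + 1) = ζ⁻¹ ^ k := by
      rw [pow_succ', ← mul_assoc, mul_inv_cancel₀ hζ0, one_mul]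
    rw [smul_smul, h]
  have hFn : ζ • ((ζ⁻¹) ^ n • x ^ n) = ζ • ((ζ⁻¹) ^ 0 • x ^ 0) := by
    rw [hx, inv_pow, hζn, inv_one]; simp
  have h3 : (∑ k ∈ Finset.range n, ζ • ((ζ⁻¹) ^ (k + 1) • x ^ (k + 1)))
        + ζ • ((ζ⁻¹) ^ 0 • x ^ 0)
      = (∑ k ∈ Finset.range n, ζ • ((ζ⁻¹) ^ k • x ^ k)) + ζ • ((ζ⁻¹) ^ 0 • x ^ 0) := by
    rw [← Finset.sum_range_succ' (fun k => ζ • ((ζ⁻¹) ^ k • x ^ k)) n,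
      Finset.sum_range_succ (fun k => ζ • ((ζ⁻¹) ^ k • x ^ k)) n, hFn]
  have h4 := add_right_cancel h3
  calc ∑ k ∈ Finset.range n, (ζ⁻¹) ^ k • x ^ (k + 1)
      = ∑ k ∈ Finset.range n, ζ • ((ζ⁻¹) ^ (k + 1) • x ^ (k + 1)) := by
        exact Finset.sum_congr rfl fun k _ => hstep k
    _ = ∑ k ∈ Finset.range n, ζ • ((ζ⁻¹) ^ k • x ^ k) := h4
    _ = ζ • ∑ k ∈ Finset.range n, (ζ⁻¹) ^ k • x ^ k := (Finset.smul_sum).symm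

lemma mul_eigProj (x : A) {n : ℕ} (hx : x ^ n = 1) {ζ : ℂ} (hζn : ζ ^ n = 1) (hζ0 : ζ ≠ 0) :
    x * eigProj n ζ x = ζ • eigProj n ζ x := by
  rw [eigProj, mul_smul_comm, Finset.mul_sum, smul_comm ζ ((n : ℂ)⁻¹)]
  congr 1
  calc ∑ k ∈ Finset.range n, x * (ζ⁻¹) ^ k • x ^ k
      = ∑ k ∈ Finset.range n, (ζ⁻¹) ^ k • x ^ (k + 1) := by
        exact Finset.sum_congr rfl fun k _ => by
          rw [mul_smul_comm, ← pow_succ']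
    _ = ζ • ∑ k ∈ Finset.range n, (ζ⁻¹) ^ k • x ^ k := shift_sum x hx hζn hζ0

lemma eigProj_mul (x : A) {n : ℕ} (hx : x ^ n = 1) {ζ : ℂ} (hζn : ζ ^ n = 1) (hζ0 : ζ ≠ 0) :
    eigProj n ζ x * x = ζ • eigProj n ζ x := by
  rw [eigProj, smul_mul_assoc, Finset.sum_mul, smul_comm ζ ((n : ℂ)⁻¹)]
  congr 1
  calc ∑ k ∈ Finset.range n, (ζ⁻¹) ^ k • x ^ k * x
      = ∑ k ∈ Finset.range n, (ζ⁻¹) ^ k • x ^ (k + 1) := by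
        exact Finset.sum_congr rfl fun k _ => by rw [smul_mul_assoc, ← pow_succ]
    _ = ζ • ∑ k ∈ Finset.range n, (ζ⁻¹) ^ k • x ^ k := shift_sum x hx hζn hζ0

lemma eigProj_mul_pow (x : A) {n : ℕ} (hx : x ^ n = 1) {ζ : ℂ} (hζn : ζ ^ n = 1) (hζ0 : ζ ≠ 0)
    (k : ℕ) : eigProj n ζ x * x ^ k = ζ ^ k • eigProj n ζ x := by
  induction k with
  | zero => simp
  | succ k ih =>
      rw [pow_succ, ← mul_assoc, ih, smul_mul_assoc, eigProj_mul x hx hζn hζ0,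
        smul_smul, ← pow_succ]

lemma eigProj_idem (x : A) {n : ℕ} (hn : 0 < n) (hx : x ^ n = 1) {ζ : ℂ} (hζn : ζ ^ n = 1)
    (hζ0 : ζ ≠ 0) : eigProj n ζ x * eigProj n ζ x = eigProj n ζ x := by
  nth_rewrite 2 [show eigProj n ζ x = (n : ℂ)⁻¹ • ∑ k ∈ Finset.range n, (ζ⁻¹) ^ k • x ^ k
    from rfl]
  rw [mul_smul_comm, Finset.mul_sum]
  have : ∀ k ∈ Finset.range n, eigProj n ζ x * (ζ⁻¹) ^ k • x ^ k = eigProj n ζ x := by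
    intro k _
    rw [mul_smul_comm, eigProj_mul_pow x hx hζn hζ0, smul_smul, inv_pow,
      inv_mul_cancel₀ (pow_ne_zero k hζ0), one_smul]
  rw [Finset.sum_congr rfl this, Finset.sum_const, Finset.card_range,
    ← Nat.cast_smul_eq_nsmul ℂ, smul_smul,
    inv_mul_cancel₀ (by exact_mod_cast hn.ne' : (n : ℂ) ≠ 0), one_smul]

lemma sum_eigProj (x : A) {n : ℕ} (hn : 0 < n) (hx : x ^ n = 1) {ω : ℂ}
    (hω : IsPrimitiveRoot ω n) :
    ∑ j ∈ Finset.range n, eigProj n (ω ^ j) x = 1 := by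
  have hω0 : ω ≠ 0 := hω.ne_zero hn.ne'
  simp only [eigProj, ← Finset.smul_sum]
  rw [Finset.sum_comm]
  have hker : ∀ k ∈ Finset.range n, ∑ j ∈ Finset.range n, ((ω ^ j)⁻¹) ^ k • x ^ k
      = (if k = 0 then (n : ℂ) • x ^ k else 0) := by
    intro k hk
    rw [← Finset.sum_smul]
    have hsum : ∑ j ∈ Finset.range n, ((ω ^ j)⁻¹) ^ k = if k = 0 then (n : ℂ) else 0 := by
      have h5 : ∀ j, ((ω ^ j)⁻¹) ^ k = ((ω ^ k)⁻¹) ^ j := by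
        intro j; rw [← inv_pow, ← inv_pow, ← pow_mul, ← pow_mul, mul_comm]
      rw [Finset.sum_congr rfl fun j _ => h5 j]
      by_cases hk0 : k = 0
      · simp [hk0]
      · rw [if_neg hk0]
        have hne : (ω ^ k)⁻¹ ≠ 1 := by
          rw [ne_eq, inv_eq_one]
          exact hω.pow_ne_one_of_pos_of_lt hk0 (Finset.mem_range.mp hk)
        rw [geom_sum_eq hne, inv_pow, ← pow_mul, mul_comm k n, pow_mul, hω.pow_eq_one,
          one_pow, inv_one, sub_self, zero_div]
    rw [hsum]
    by_cases hk0 : k = 0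
    · simp [hk0]
    · simp [hk0]
  rw [Finset.sum_congr rfl hker, Finset.sum_ite_eq' (Finset.range n) 0
    (fun k => (n : ℂ) • x ^ k), if_pos (Finset.mem_range.mpr hn), pow_zero, smul_smul,
    inv_mul_cancel₀ (by exact_mod_cast hn.ne' : (n : ℂ) ≠ 0), one_smul]

end eigProj

lemma mapCoeff_injective {R S : Type*} [CommRing R] [CommRing S] (f : R →+* S)
    (hf : Function.Injective f) : Function.Injective (mapCoeff G f) := by
  intro a b h
  ext g
  apply hf
  rw [← mapCoeff_apply f a g, ← mapCoeff_apply f b g, h]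

set_option maxHeartbeats 1000000 in
lemma berman_higman (u : (MonoidAlgebra ℤ G)ˣ) {n : ℕ} (hn : 0 < n)
    (hun : (u : MonoidAlgebra ℤ G) ^ n = 1) (haug : aug ℤ G (u : MonoidAlgebra ℤ G) = 1)
    (h1 : (u : MonoidAlgebra ℤ G).coeff 1 ≠ 0) : (u : MonoidAlgebra ℤ G) = 1 := by
  classical
  haveI : Module.Finite ℂ (MonoidAlgebra ℂ G) :=
    Module.Finite.of_basis (MonoidAlgebra.basis G ℂ : Module.Basis G ℂ (MonoidAlgebra ℂ G))
  have hinj : Function.Injective (mapCoeff G (Int.castRingHom ℂ)) :=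
    mapCoeff_injective _ (fun a b hab => Int.cast_injective hab)
  set v : MonoidAlgebra ℂ G := mapCoeff G (Int.castRingHom ℂ) u with hv
  have hvn : v ^ n = 1 := by rw [hv, ← map_pow, hun, map_one]
  set ω : ℂ := Complex.exp (2 * Real.pi * Complex.I / n) with hωdef
  have hω : IsPrimitiveRoot ω n := Complex.isPrimitiveRoot_exp n hn.ne'
  have hω0 : ω ≠ 0 := hω.ne_zero hn.ne'
  have hωjn : ∀ j : ℕ, (ω ^ j) ^ n = 1 := by
    intro j; rw [← pow_mul, mul_comm, pow_mul, hω.pow_eq_one, one_pow]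
  have hωj0 : ∀ j : ℕ, ω ^ j ≠ 0 := fun j => pow_ne_zero j hω0
  set P : ℕ → MonoidAlgebra ℂ G := fun j => eigProj n (ω ^ j) v with hP
  have hPidem : ∀ j, P j * P j = P j := fun j => eigProj_idem v hn hvn (hωjn j) (hωj0 j)
  have hPsum : ∑ j ∈ Finset.range n, P j = 1 := sum_eigProj v hn hvn hω
  have hvP : ∀ j, v * P j = ω ^ j • P j := fun j => mul_eigProj v hvn (hωjn j) (hωj0 j)
  have hveq : v = ∑ j ∈ Finset.range n, (ω ^ j) • P j := by
    calc v = v * ∑ j ∈ Finset.range n, P j := by rw [hPsum, mul_one]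
      _ = ∑ j ∈ Finset.range n, v * P j := Finset.mul_sum _ _ _
      _ = ∑ j ∈ Finset.range n, (ω ^ j) • P j :=
          Finset.sum_congr rfl fun j _ => hvP j
  have hrank : ∀ j, ∃ m : ℕ, Tr (P j) = m ∧ (m = 0 → P j = 0) := by
    intro j
    set f := (Algebra.lmul ℂ (MonoidAlgebra ℂ G)) (P j) with hf
    have hidem : f ∘ₗ f = f := by
      rw [← Module.End.mul_eq_comp, hf, ← map_mul, hPidem]
    obtain ⟨q, hq⟩ := (LinearMap.isProj_iff_isIdempotentElem f).mpr hidem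
    refine ⟨Module.finrank ℂ q, ?_, ?_⟩
    · exact hq.trace
    · intro hm0
      have hbot : q = ⊥ := Submodule.finrank_eq_zero.mp hm0
      have hmem : f 1 ∈ q := hq.map_mem 1
      rw [hbot, Submodule.mem_bot] at hmem
      rw [show f 1 = P j * 1 from rfl, mul_one] at hmem
      exact hmem
  choose m hm hm0 using hrank
  set d : ℕ := Fintype.card G with hd
  have hdpos : 0 < d := Fintype.card_pos
  have hsum_m : ∑ j ∈ Finset.range n, (m j : ℂ) = (d : ℂ) := by
    calc ∑ j ∈ Finset.range n, (m j : ℂ) = ∑ j ∈ Finset.range n, Tr (P j) :=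
          Finset.sum_congr rfl fun j _ => (hm j).symm
      _ = Tr (∑ j ∈ Finset.range n, P j) := (map_sum Tr P _).symm
      _ = Tr 1 := by rw [hPsum]
      _ = (d : ℂ) := by
          rw [Tr_apply]
          rw [show (1 : MonoidAlgebra ℂ G).coeff (1 : G) = 1 from ?_, mul_one]
          rw [MonoidAlgebra.one_def, coeff_single, Finsupp.single_eq_same]
  set c : ℤ := (u : MonoidAlgebra ℤ G).coeff 1 with hc
  have hTrv : Tr v = (d : ℂ) * (c : ℂ) := by
    rw [Tr_apply]
    congr 1
    rw [hv, mapCoeff_apply]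
    rfl
  have hTrv2 : Tr v = ∑ j ∈ Finset.range n, ω ^ j * (m j : ℂ) := by
    conv_lhs => rw [hveq]
    rw [map_sum]
    exact Finset.sum_congr rfl fun j _ => by rw [map_smul, smul_eq_mul, hm j]
  have habsω : ‖ω‖ = 1 := by
    have h8 : ‖ω‖ ^ n = 1 := by rw [← norm_pow, hω.pow_eq_one, norm_one]
    rcases (pow_eq_one_iff_cases).mp h8 with h | h | h
    · omega
    · exact h
    · exfalso; obtain ⟨h9, -⟩ := h; linarith [norm_nonneg ω]
  have habsj : ∀ j : ℕ, ‖ω ^ j‖ = 1 := by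
    intro j; rw [norm_pow, habsω, one_pow]
  have hre_bd : ∀ j : ℕ, -1 ≤ (ω ^ j).re ∧ (ω ^ j).re ≤ 1 := by
    intro j
    have h := Complex.abs_re_le_norm (ω ^ j)
    rw [habsj j] at h
    exact abs_le.mp h
  have hre_sum : ∑ j ∈ Finset.range n, (ω ^ j).re * (m j : ℝ) = (d : ℝ) * (c : ℝ) := by
    have h := congrArg Complex.re (hTrv2.symm.trans hTrv)
    simpa [Complex.re_sum, Complex.mul_re] using h
  have hm_sum : ∑ j ∈ Finset.range n, (m j : ℝ) = (d : ℝ) := by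
    have h := congrArg Complex.re hsum_m
    simpa [Complex.re_sum] using h
  have hc0 : c ≠ 0 := h1
  have hd' : (0:ℝ) < d := by exact_mod_cast hdpos
  have hc1 : c = 1 ∨ c = -1 := by
    have hle : (d : ℝ) * (c : ℝ) ≤ d := by
      rw [← hre_sum, ← hm_sum]
      refine Finset.sum_le_sum fun j _ => ?_
      have h2 := (hre_bd j).2
      have h3 : (0:ℝ) ≤ (m j : ℝ) := Nat.cast_nonneg _
      nlinarith
    have hge : -(d:ℝ) ≤ (d : ℝ) * (c : ℝ) := by
      rw [← hre_sum]
      have : -(d:ℝ) = ∑ j ∈ Finset.range n, -(m j : ℝ) := by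
        rw [← hm_sum, Finset.sum_neg_distrib]
      rw [this]
      refine Finset.sum_le_sum fun j _ => ?_
      have h2 := (hre_bd j).1
      have h3 : (0:ℝ) ≤ (m j : ℝ) := Nat.cast_nonneg _
      nlinarith
    have hcle : (c:ℝ) ≤ 1 := by nlinarith
    have hcge : (-1:ℝ) ≤ (c:ℝ) := by nlinarith
    have hcle' : c ≤ 1 := by exact_mod_cast hcle
    have hcge' : -1 ≤ c := by exact_mod_cast hcge
    omega
  rcases hc1 with hc1 | hc1
  · have hz : ∀ j ∈ Finset.range n, (1 - (ω ^ j).re) * (m j : ℝ) = 0 := by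
      have hsum0 : ∑ j ∈ Finset.range n, (1 - (ω ^ j).re) * (m j : ℝ) = 0 := by
        have heq : ∑ j ∈ Finset.range n, (1 - (ω ^ j).re) * (m j : ℝ)
            = (∑ j ∈ Finset.range n, (m j : ℝ))
              - ∑ j ∈ Finset.range n, (ω ^ j).re * (m j : ℝ) := by
          rw [← Finset.sum_sub_distrib]
          exact Finset.sum_congr rfl fun j _ => by ring
        rw [heq, hm_sum, hre_sum, hc1]
        push_cast
        ring
      exact fun j hj => (Finset.sum_eq_zero_iff_of_nonneg (fun j _ =>
        mul_nonneg (by linarith [(hre_bd j).2]) (Nat.cast_nonneg _))).mp hsum0 j hj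
    have hPj0 : ∀ j ∈ Finset.range n, j ≠ 0 → P j = 0 := by
      intro j hj hj0
      apply hm0 j
      by_contra hmj
      have hmpos : (0:ℝ) < (m j : ℝ) := by exact_mod_cast Nat.pos_of_ne_zero hmj
      have h6 : (ω ^ j).re = 1 := by
        rcases mul_eq_zero.mp (hz j hj) with h | h
        · linarith
        · exact absurd h (ne_of_gt hmpos)
      have him : (ω ^ j).im = 0 := by
        have hsq := Complex.sq_norm (ω ^ j)
        rw [habsj j, Complex.normSq_apply, h6] at hsq
        nlinarith
      have h7 : ω ^ j = 1 := Complex.ext (by simp [h6]) (by simp [him])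
      exact hω.pow_ne_one_of_pos_of_lt hj0 (Finset.mem_range.mp hj) h7
    have hv1 : v = 1 := by
      rw [hveq, ← hPsum]
      apply Finset.sum_congr rfl
      intro j hj
      by_cases hj0 : j = 0
      · subst hj0; simp
      · rw [hPj0 j hj hj0, smul_zero]
    exact hinj (by rw [← hv, hv1, map_one])
  · exfalso
    have hz : ∀ j ∈ Finset.range n, (1 + (ω ^ j).re) * (m j : ℝ) = 0 := by
      have hsum0 : ∑ j ∈ Finset.range n, (1 + (ω ^ j).re) * (m j : ℝ) = 0 := by
        have heq : ∑ j ∈ Finset.range n, (1 + (ω ^ j).re) * (m j : ℝ)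
            = (∑ j ∈ Finset.range n, (m j : ℝ))
              + ∑ j ∈ Finset.range n, (ω ^ j).re * (m j : ℝ) := by
          rw [← Finset.sum_add_distrib]
          exact Finset.sum_congr rfl fun j _ => by ring
        rw [heq, hm_sum, hre_sum, hc1]
        push_cast
        ring
      exact fun j hj => (Finset.sum_eq_zero_iff_of_nonneg (fun j _ =>
        mul_nonneg (by linarith [(hre_bd j).1]) (Nat.cast_nonneg _))).mp hsum0 j hj
    have hωneg : ∀ j ∈ Finset.range n, P j ≠ 0 → ω ^ j = -1 := by
      intro j hj hPz
      have hmj : m j ≠ 0 := fun h => hPz (hm0 j h)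
      have hmpos : (0:ℝ) < (m j : ℝ) := by exact_mod_cast Nat.pos_of_ne_zero hmj
      have h6 : (ω ^ j).re = -1 := by
        rcases mul_eq_zero.mp (hz j hj) with h | h
        · linarith
        · exact absurd h (ne_of_gt hmpos)
      have him : (ω ^ j).im = 0 := by
        have hsq := Complex.sq_norm (ω ^ j)
        rw [habsj j, Complex.normSq_apply, h6] at hsq
        nlinarith
      exact Complex.ext (by simp [h6]) (by simp [him])
    have hv1 : v = -1 := by
      have hcongr : ∀ j ∈ Finset.range n, (ω ^ j) • P j = (-1:ℂ) • P j := by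
        intro j hj
        by_cases hPz : P j = 0
        · rw [hPz, smul_zero, smul_zero]
        · rw [hωneg j hj hPz]
      rw [hveq, Finset.sum_congr rfl hcongr, ← Finset.smul_sum, hPsum]
      simp
    have himg : mapCoeff G (Int.castRingHom ℂ) ((-1 : MonoidAlgebra ℤ G))
        = mapCoeff G (Int.castRingHom ℂ) (u : MonoidAlgebra ℤ G) := by
      rw [map_neg, map_one, ← hv, hv1]
    have hu : (u : MonoidAlgebra ℤ G) = -1 := (hinj himg).symm
    rw [hu] at haug
    rw [map_neg, map_one] at haug
    exact absurd haug (by norm_num)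

end Aux

theorem higman_linearly_independent (G : Type*) [Group G] [Fintype G]
    (H : Subgroup (MonoidAlgebra ℤ G)ˣ) [Finite H]
    (hH : ∀ h ∈ H, aug ℤ G (h : MonoidAlgebra ℤ G) = 1) :
    LinearIndependent ℚ (fun h : H =>
      mapCoeff G (Int.castRingHom ℚ) ((h : (MonoidAlgebra ℤ G)ˣ) : MonoidAlgebra ℤ G)) := by
  classical
  haveI : Fintype H := Fintype.ofFinite H
  refine Fintype.linearIndependent_iff.mpr fun cf hcf h₀ => ?_
  set w : MonoidAlgebra ℚ G :=
    mapCoeff G (Int.castRingHom ℚ) (((h₀⁻¹ : H) : (MonoidAlgebra ℤ G)ˣ) : MonoidAlgebra ℤ G)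
    with hw
  set φ : MonoidAlgebra ℚ G →ₗ[ℚ] ℚ :=
    (Finsupp.lapply (1 : G) : (G →₀ ℚ) →ₗ[ℚ] ℚ).comp ((MonoidAlgebra.coeffLinearEquiv ℚ).toLinearMap.comp (LinearMap.mulRight ℚ w)) with hφ
  have hφ_apply : ∀ h : H,
      φ (mapCoeff G (Int.castRingHom ℚ) ((h : (MonoidAlgebra ℤ G)ˣ) : MonoidAlgebra ℤ G))
      = ((((((h * h₀⁻¹ : H) : (MonoidAlgebra ℤ G)ˣ) : MonoidAlgebra ℤ G)).coeff 1 : ℤ) : ℚ) := by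
    intro h
    have hmul : mapCoeff G (Int.castRingHom ℚ)
          ((h : (MonoidAlgebra ℤ G)ˣ) : MonoidAlgebra ℤ G) * w
        = mapCoeff G (Int.castRingHom ℚ)
          ((((h * h₀⁻¹ : H) : (MonoidAlgebra ℤ G)ˣ) : MonoidAlgebra ℤ G)) := by
      rw [hw, ← map_mul]
      norm_cast
    show (mapCoeff G (Int.castRingHom ℚ)
        ((h : (MonoidAlgebra ℤ G)ˣ) : MonoidAlgebra ℤ G) * w).coeff 1 = _
    rw [hmul, mapCoeff_apply]
    rfl
  have hδ : ∀ h : H, h ≠ h₀ →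
      φ (mapCoeff G (Int.castRingHom ℚ)
        ((h : (MonoidAlgebra ℤ G)ˣ) : MonoidAlgebra ℤ G)) = 0 := by
    intro h hne
    rw [hφ_apply h, Int.cast_eq_zero]
    set x : H := h * h₀⁻¹ with hx
    have hx1 : x ≠ 1 := by
      rw [hx, ne_eq, mul_inv_eq_one]
      exact hne
    have hnpos : 0 < orderOf x := orderOf_pos x
    have hun : ((x : (MonoidAlgebra ℤ G)ˣ) : MonoidAlgebra ℤ G) ^ orderOf x = 1 := by
      have h9 : ((x ^ orderOf x : H) : (MonoidAlgebra ℤ G)ˣ) = 1 := by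
        rw [pow_orderOf_eq_one x]; rfl
      rw [SubgroupClass.coe_pow] at h9
      rw [← Units.val_pow_eq_pow_val, h9, Units.val_one]
    have haugx : aug ℤ G ((x : (MonoidAlgebra ℤ G)ˣ) : MonoidAlgebra ℤ G) = 1 :=
      hH _ (SetLike.coe_mem x)
    by_contra hcoef
    have h2 := berman_higman (x : (MonoidAlgebra ℤ G)ˣ) hnpos hun haugx hcoef
    have h3 : (x : (MonoidAlgebra ℤ G)ˣ) = 1 := Units.ext (h2.trans Units.val_one.symm)
    exact hx1 (OneMemClass.coe_eq_one.mp h3)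
  have hφ0 : φ (mapCoeff G (Int.castRingHom ℚ)
      ((h₀ : (MonoidAlgebra ℤ G)ˣ) : MonoidAlgebra ℤ G)) = 1 := by
    rw [hφ_apply h₀, mul_inv_cancel]
    rw [show (((1 : H) : (MonoidAlgebra ℤ G)ˣ) : MonoidAlgebra ℤ G)
      = (1 : MonoidAlgebra ℤ G) from rfl]
    rw [MonoidAlgebra.one_def, coeff_single, Finsupp.single_eq_same]
    norm_num
  have hsum := congrArg φ hcf
  rw [map_sum, map_zero] at hsum
  simp only [map_smul, smul_eq_mul] at hsum
  rw [Finset.sum_eq_single h₀ (fun b _ hb => by rw [hδ b hb, mul_zero])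
    (fun hmem => absurd (Finset.mem_univ h₀) hmem), hφ0, mul_one] at hsum
  exact hsum
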